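/- For every natural number n ≥ 0, the n-th Bernoulli number Bₙ (with the convention B₁ = 1/2, i.e. Bₙ = Bₙ(0) for the Bernoulli polynomials with Bₙ(x+1) − Bₙ(x) = n x^{n−1} and B₁(0) = 1/2) satisfies Kronecker's formula: Bₙ = − Σ_{j=1}^{n+1} ((−1)^j / j) · C(n+1, j) · Σ_{k=1}^{j} k^n, where C(n+1, j) denotes the binomial coefficient. -/

import Mathlib

open Finset

lemma alt_zero (m : ℕ) : ∀ N : ℕ, m < N →
    ∑ j ∈ range (N + 1), (-1 : ℚ) ^ j * (N.choose j : ℚ) * (j : ℚ) ^ m = 0 := by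
  induction m using Nat.strong_induction_on with
  | _ m ih =>
    intro N h
    rcases m with _ | m
    · simp only [pow_zero, mul_one]
      have h2 := Int.alternating_sum_range_choose_of_ne (show N ≠ 0 by omega)
      have : ((∑ i ∈ range (N + 1), (-1 : ℤ) ^ i * ↑(N.choose i) : ℤ) : ℚ) = 0 := by
        rw [h2]; simp
      push_cast at this
      convert this using 2
    · obtain ⟨N', rfl⟩ : ∃ N', N = N' + 1 := ⟨N - 1, by omega⟩
      rw [Finset.sum_range_succ']
      have hterm : ∀ i : ℕ, (-1 : ℚ) ^ (i + 1) * ((N' + 1).choose (i + 1) : ℚ) * ((i + 1 : ℕ) : ℚ) ^ (m + 1)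
          = -((N' : ℚ) + 1) * ∑ t ∈ range (m + 1),
              (m.choose t : ℚ) * ((-1 : ℚ) ^ i * (N'.choose i : ℚ) * (i : ℚ) ^ t) := by
        intro i
        have h3 : ((N' + 1) * N'.choose i : ℕ) = ((N' + 1).choose (i + 1) * (i + 1) : ℕ) := by
          simpa using Nat.add_one_mul_choose_eq N' i
        have h4 : (((N' + 1) * N'.choose i : ℕ) : ℚ) = (((N' + 1).choose (i + 1) * (i + 1) : ℕ) : ℚ) := by
          exact_mod_cast h3
        push_cast at h4
        have hc : (((N' + 1).choose (i + 1) : ℚ)) * ((i : ℚ) + 1) = ((N' : ℚ) + 1) * (N'.choose i : ℚ) := by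
          linarith
        have hp : ((i : ℚ) + 1) ^ m = ∑ t ∈ range (m + 1), (i : ℚ) ^ t * 1 ^ (m - t) * (m.choose t : ℚ) :=
          add_pow (i : ℚ) 1 m
        push_cast
        calc (-1 : ℚ) ^ (i + 1) * ((N' + 1).choose (i + 1) : ℚ) * ((i : ℚ) + 1) ^ (m + 1)
            = (-((-1 : ℚ) ^ i) * ((((N' + 1).choose (i + 1) : ℚ)) * ((i : ℚ) + 1))) * ((i : ℚ) + 1) ^ m := by
              rw [pow_succ, pow_succ]; ring
          _ = (-((-1 : ℚ) ^ i) * (((N' : ℚ) + 1) * (N'.choose i : ℚ))) * ∑ t ∈ range (m + 1), (i : ℚ) ^ t * 1 ^ (m - t) * (m.choose t : ℚ) := by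
              rw [hc, hp]
          _ = -((N' : ℚ) + 1) * ∑ t ∈ range (m + 1),
              (m.choose t : ℚ) * ((-1 : ℚ) ^ i * (N'.choose i : ℚ) * (i : ℚ) ^ t) := by
              rw [Finset.mul_sum, Finset.mul_sum]
              exact Finset.sum_congr rfl fun t _ => by ring
      have h0 : (-1 : ℚ) ^ 0 * ((N' + 1).choose 0 : ℚ) * ((0 : ℕ) : ℚ) ^ (m + 1) = 0 := by simp
      rw [h0, add_zero, Finset.sum_congr rfl fun i _ => hterm i, ← Finset.mul_sum,
        Finset.sum_comm]
      have : ∀ t ∈ range (m + 1), ∑ i ∈ range (N' + 1),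
          (m.choose t : ℚ) * ((-1 : ℚ) ^ i * (N'.choose i : ℚ) * (i : ℚ) ^ t) = 0 := by
        intro t ht
        rw [← Finset.mul_sum, ih t (mem_range.mp ht) N' (by have := mem_range.mp ht; omega), mul_zero]
      rw [Finset.sum_eq_zero this, mul_zero]

/-- Kronecker's formula for the Bernoulli numbers (convention
`B₁ = +1/2`, i.e. Mathlib's `bernoulli'`):
`Bₙ = − ∑_{j=1}^{n+1} ((−1)^j / j) ⬝ C(n+1, j) ⬝ ∑_{k=1}^{j} k^n`. -/
theorem stmt_3 (n : ℕ) :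
    bernoulli' n =
      -∑ j ∈ Finset.Icc 1 (n + 1),
        ((-1 : ℚ) ^ j / (j : ℚ)) * ((n + 1).choose j : ℚ) *
          ∑ k ∈ Finset.Icc 1 j, (k : ℚ) ^ n := by
  have inner : ∀ i, i ≤ n → ∑ j ∈ Finset.Icc 1 (n + 1),
      (-1 : ℚ) ^ j * (((n + 1).choose j) : ℚ) * (j : ℚ) ^ (n - i) = -(0 : ℚ) ^ (n - i) := by
    intro i hi
    have h1 := alt_zero (n - i) (n + 1) (by omega)
    rw [range_eq_Ico, Finset.sum_eq_sum_Ico_succ_bot (by omega)] at h1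
    rw [← Finset.Ico_add_one_right_eq_Icc]
    simp only [Nat.cast_zero, pow_zero, one_mul, Nat.choose_zero_right, Nat.cast_one] at h1
    linarith
  have key : (∑ j ∈ Finset.Icc 1 (n + 1),
        ((-1 : ℚ) ^ j / (j : ℚ)) * ((n + 1).choose j : ℚ) *
          ∑ k ∈ Finset.Icc 1 j, (k : ℚ) ^ n) = -bernoulli' n := by
    calc (∑ j ∈ Finset.Icc 1 (n + 1),
        ((-1 : ℚ) ^ j / (j : ℚ)) * ((n + 1).choose j : ℚ) *
          ∑ k ∈ Finset.Icc 1 j, (k : ℚ) ^ n)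
        = ∑ j ∈ Finset.Icc 1 (n + 1), ∑ i ∈ range (n + 1),
            (bernoulli' i * ((n + 1).choose i : ℚ) / ((n : ℚ) + 1)) *
              ((-1 : ℚ) ^ j * (((n + 1).choose j) : ℚ) * (j : ℚ) ^ (n - i)) := by
          refine Finset.sum_congr rfl fun j hj => ?_
          have hj1 : 1 ≤ j := (Finset.mem_Icc.mp hj).1
          rw [show Finset.Icc 1 j = Finset.Ico 1 (j + 1) from (Finset.Ico_add_one_right_eq_Icc 1 j).symm,
            sum_Ico_pow, Finset.mul_sum]
          refine Finset.sum_congr rfl fun i hi => ?_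
          have hi' : i ≤ n := Nat.lt_succ_iff.mp (Finset.mem_range.mp hi)
          have hjq : (j : ℚ) ≠ 0 := Nat.cast_ne_zero.mpr (by omega)
          rw [show n + 1 - i = (n - i) + 1 from by omega, pow_succ]
          field_simp
      _ = ∑ i ∈ range (n + 1), (bernoulli' i * ((n + 1).choose i : ℚ) / ((n : ℚ) + 1)) *
            ∑ j ∈ Finset.Icc 1 (n + 1), (-1 : ℚ) ^ j * (((n + 1).choose j) : ℚ) * (j : ℚ) ^ (n - i) := by
          rw [Finset.sum_comm]
          exact Finset.sum_congr rfl fun i _ => (Finset.mul_sum _ _ _).symm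
      _ = ∑ i ∈ range (n + 1), (bernoulli' i * ((n + 1).choose i : ℚ) / ((n : ℚ) + 1)) *
            (-(0 : ℚ) ^ (n - i)) := by
          refine Finset.sum_congr rfl fun i hi => ?_
          rw [inner i (Nat.lt_succ_iff.mp (Finset.mem_range.mp hi))]
      _ = -bernoulli' n := by
          rw [Finset.sum_eq_single n]
          · rw [Nat.sub_self, pow_zero, Nat.choose_succ_self_right]
            have h5 : ((n : ℚ) + 1) ≠ 0 := by positivity
            field_simp
            push_cast
            ring
          · intro i hi hne
            have h6 : n - i ≠ 0 := by have := mem_range.mp hi; omega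
            rw [zero_pow h6, neg_zero, mul_zero]
          · intro h; exact absurd (Finset.self_mem_range_succ n) h
  rw [key, neg_neg]
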